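/- Let c ∈ (0,√2) and p ∈ (0,1) with p ≠ p₀. Then L(c,p,θ) tends, as θ → −∞, to the value M := (1/2)(1 + κ₂/κ₁) + (1/π)·arctan(−θ₁κ₂) − (κ₂/(πκ₁))·arctan(−θ₂κ₁). Moreover, if p > p₀ then M ∈ (1/2, 1 + κ₂/(2κ₁)). -/

import Mathlib

open Real Filter Set

set_option maxHeartbeats 1000000

/-- `ξ = p c⁴ / 4`. -/
noncomputable def xiPar (c p : ℝ) : ℝ := p * c ^ 4 / 4

/-- `κ₁ = √((c² − √(c⁴ − 4ξ))/2)`. -/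
noncomputable def kappa1 (c p : ℝ) : ℝ :=
  Real.sqrt ((c ^ 2 - Real.sqrt (c ^ 4 - 4 * xiPar c p)) / 2)

/-- `κ₂ = √((c² + √(c⁴ − 4ξ))/2)`. -/
noncomputable def kappa2 (c p : ℝ) : ℝ :=
  Real.sqrt ((c ^ 2 + Real.sqrt (c ^ 4 - 4 * xiPar c p)) / 2)

/-- The function `L(c,p,θ)` from the paper. -/
noncomputable def Lfun (c p θ : ℝ) : ℝ :=
  (1 / 2) * (1 + kappa2 c p / kappa1 c p)
  + (1 / Real.pi) * Real.arctan
      ((kappa2 c p * (-(kappa1 c p) ^ 2 + xiPar c p + xiPar c p * θ * Real.sqrt (2 - c ^ 2))) /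
       (xiPar c p * (θ * (kappa1 c p) ^ 2 + Real.sqrt (2 - c ^ 2) + θ * (1 - c ^ 2))))
  - (kappa2 c p / (kappa1 c p * Real.pi)) * Real.arctan
      ((kappa1 c p * (-(kappa2 c p) ^ 2 + xiPar c p + xiPar c p * θ * Real.sqrt (2 - c ^ 2))) /
       (xiPar c p * (θ * (kappa2 c p) ^ 2 + Real.sqrt (2 - c ^ 2) + θ * (1 - c ^ 2))))

/-- The discontinuity point `θ₁ = −2√(2−c²)/(2−c² − c²√(1−p))`. -/
noncomputable def theta1 (c p : ℝ) : ℝ :=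
  -2 * Real.sqrt (2 - c ^ 2) / (2 - c ^ 2 - c ^ 2 * Real.sqrt (1 - p))

/-- The discontinuity point `θ₂ = −2√(2−c²)/(2−c² + c²√(1−p))`. -/
noncomputable def theta2 (c p : ℝ) : ℝ :=
  -2 * Real.sqrt (2 - c ^ 2) / (2 - c ^ 2 + c ^ 2 * Real.sqrt (1 - p))

/-- The threshold `p₀ = 4(c²−1)/c⁴`. -/
noncomputable def p0 (c : ℝ) : ℝ := 4 * (c ^ 2 - 1) / c ^ 4

lemma tendsto_inv_atBot_zero' : Tendsto (fun θ : ℝ => θ⁻¹) atBot (nhds 0) := by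
  have ha : Tendsto (fun θ : ℝ => -θ) atBot atTop := tendsto_neg_atBot_atTop
  have hb : Tendsto (fun x : ℝ => x⁻¹) atTop (nhds 0) := tendsto_inv_atTop_zero
  have hc := (hb.comp ha).neg
  simp only [Function.comp_def] at hc
  have e : (fun θ : ℝ => θ⁻¹) = fun θ : ℝ => -(-θ)⁻¹ := by
    funext θ; rw [inv_neg, neg_neg]
  rw [e, show (0:ℝ) = -(0:ℝ) by simp]
  exact hc

lemma tendsto_affine_div (A B C D : ℝ) (hD : D ≠ 0) :
    Tendsto (fun θ : ℝ => (A + B*θ)/(C + D*θ)) atBot (nhds (B/D)) := by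
  have h0 := tendsto_inv_atBot_zero'
  have h1 : Tendsto (fun θ : ℝ => (A*θ⁻¹ + B)/(C*θ⁻¹ + D)) atBot (nhds (B/D)) := by
    have := ((h0.const_mul A).add_const B).div ((h0.const_mul C).add_const D) (by simpa using hD)
    simp only [mul_zero, zero_add] at this; exact this
  apply h1.congr'
  filter_upwards [eventually_lt_atBot (0:ℝ)] with θ hθ
  have hθ0 : θ ≠ 0 := ne_of_lt hθ
  have e1 : A*θ⁻¹ + B = (A + B*θ)/θ := by field_simp
  have e2 : C*θ⁻¹ + D = (C + D*θ)/θ := by field_simp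
  rw [e1, e2, div_div_div_cancel_right₀ hθ0]

/-- For `c ∈ (0,√2)`, `p ∈ (0,1)`, `p ≠ p₀`, `L(c,p,θ)` tends as
`θ → −∞` to `M = (1/2)(1 + κ₂/κ₁) + (1/π)arctan(−θ₁κ₂) − (κ₂/(πκ₁))arctan(−θ₂κ₁)`;
moreover if `p > p₀` then `M ∈ (1/2, 1 + κ₂/(2κ₁))`. -/
theorem stmt10 (c p : ℝ) (hc : c ∈ Set.Ioo 0 (Real.sqrt 2)) (hp : p ∈ Set.Ioo 0 1)
    (hpp : p ≠ p0 c)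
    (M : ℝ)
    (hM : M = (1 / 2) * (1 + kappa2 c p / kappa1 c p)
        + (1 / Real.pi) * Real.arctan (-(theta1 c p) * kappa2 c p)
        - (kappa2 c p / (Real.pi * kappa1 c p)) * Real.arctan (-(theta2 c p) * kappa1 c p)) :
    Filter.Tendsto (fun θ => Lfun c p θ) Filter.atBot (nhds M) ∧
    (p > p0 c → M ∈ Set.Ioo (1 / 2 : ℝ) (1 + kappa2 c p / (2 * kappa1 c p))) := by
  obtain ⟨hc0, hcs⟩ := hc
  obtain ⟨hp0', hp1⟩ := hp
  have hc2 : c^2 < 2 := by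
    have := (Real.lt_sqrt (le_of_lt hc0)).mp hcs
    linarith
  have hcpos2 : 0 < c^2 := by positivity
  have hq0 : 0 < Real.sqrt (1-p) := Real.sqrt_pos.mpr (by linarith)
  set q := Real.sqrt (1-p) with hqdef
  have hqq : q^2 = 1 - p := Real.sq_sqrt (by linarith)
  have hq1 : q < 1 := by nlinarith
  have hw0 : 0 < Real.sqrt (2-c^2) := Real.sqrt_pos.mpr (by linarith)
  set w := Real.sqrt (2-c^2) with hwdef
  have hxi : 0 < xiPar c p := by
    have : 0 < p * c^4 := mul_pos hp0' (by positivity)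
    unfold xiPar; linarith
  have hsq : Real.sqrt (c^4 - 4*xiPar c p) = c^2*q := by
    rw [show c^4 - 4*xiPar c p = (c^2)^2*(1-p) by unfold xiPar; ring,
      Real.sqrt_mul (sq_nonneg _), Real.sqrt_sq (le_of_lt hcpos2)]
  have hk1sq : (kappa1 c p)^2 = (c^2 - c^2*q)/2 := by
    unfold kappa1; rw [hsq]; exact Real.sq_sqrt (by nlinarith)
  have hk2sq : (kappa2 c p)^2 = (c^2 + c^2*q)/2 := by
    unfold kappa2; rw [hsq]; exact Real.sq_sqrt (by nlinarith)
  have hk1 : 0 < kappa1 c p := by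
    unfold kappa1; rw [hsq]; exact Real.sqrt_pos.mpr (by nlinarith)
  have hk2 : 0 < kappa2 c p := by
    unfold kappa2; rw [hsq]; exact Real.sqrt_pos.mpr (by nlinarith)
  have hd2 : 0 < 2 - c^2 + c^2*q := by nlinarith
  have hd1 : 2 - c^2 - c^2*q ≠ 0 := by
    intro h
    apply hpp
    have hc4 : (0:ℝ) < c^4 := by positivity
    have h' : c^2*q = 2 - c^2 := by linarith
    have h2 : (c^2*q)^2 = (2-c^2)^2 := by rw [h']
    have h3 : c^4*(1-p) = (2-c^2)^2 := by
      calc c^4*(1-p) = c^4*q^2 := by rw [hqq]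
        _ = (c^2*q)^2 := by ring
        _ = (2-c^2)^2 := h2
    unfold p0
    rw [eq_div_iff (ne_of_gt hc4)]
    linear_combination -h3
  have hD1 : xiPar c p * ((kappa1 c p)^2 + 1 - c^2) ≠ 0 := by
    have e : (kappa1 c p)^2 + 1 - c^2 = (2 - c^2 - c^2*q)/2 := by rw [hk1sq]; ring
    rw [e]
    exact mul_ne_zero (ne_of_gt hxi) (by intro h; apply hd1; linarith [div_eq_zero_iff.mp h])
  have hD2 : xiPar c p * ((kappa2 c p)^2 + 1 - c^2) ≠ 0 := by
    have e : (kappa2 c p)^2 + 1 - c^2 = (2 - c^2 + c^2*q)/2 := by rw [hk2sq]; ring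
    rw [e]
    exact mul_ne_zero (ne_of_gt hxi) (by positivity)
  have t1 := tendsto_affine_div (kappa2 c p * (xiPar c p - (kappa1 c p)^2))
    (kappa2 c p * (xiPar c p * w)) (xiPar c p * w)
    (xiPar c p * ((kappa1 c p)^2 + 1 - c^2)) hD1
  have t2 := tendsto_affine_div (kappa1 c p * (xiPar c p - (kappa2 c p)^2))
    (kappa1 c p * (xiPar c p * w)) (xiPar c p * w)
    (xiPar c p * ((kappa2 c p)^2 + 1 - c^2)) hD2
  have v1 : kappa2 c p * (xiPar c p * w) / (xiPar c p * ((kappa1 c p)^2 + 1 - c^2))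
      = -(theta1 c p) * kappa2 c p := by
    have e : -(theta1 c p) * kappa2 c p = (2*w*kappa2 c p)/(2 - c^2 - c^2*q) := by
      unfold theta1; rw [← hwdef, ← hqdef]; ring
    rw [e, div_eq_div_iff hD1 hd1, hk1sq]; ring
  have v2 : kappa1 c p * (xiPar c p * w) / (xiPar c p * ((kappa2 c p)^2 + 1 - c^2))
      = -(theta2 c p) * kappa1 c p := by
    have e : -(theta2 c p) * kappa1 c p = (2*w*kappa1 c p)/(2 - c^2 + c^2*q) := by
      unfold theta2; rw [← hwdef, ← hqdef]; ring
    rw [e, div_eq_div_iff hD2 (ne_of_gt hd2), hk2sq]; ring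
  have a1 := (Real.continuous_arctan.tendsto _).comp t1
  have a2 := (Real.continuous_arctan.tendsto _).comp t2
  simp only [Function.comp_def] at a1 a2
  have big := ((a1.const_mul (1/Real.pi)).const_add ((1/2)*(1+kappa2 c p/kappa1 c p))).sub
    (a2.const_mul (kappa2 c p/(kappa1 c p*Real.pi)))
  rw [v1] at big
  rw [v2] at big
  constructor
  · have hMe : (1/2)*(1+kappa2 c p/kappa1 c p)
        + (1/Real.pi)*Real.arctan (-(theta1 c p)*kappa2 c p)
        - (kappa2 c p/(kappa1 c p*Real.pi))*Real.arctan (-(theta2 c p)*kappa1 c p) = M := by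
      rw [hM]; ring
    rw [← hMe]
    refine big.congr fun θ => ?_
    unfold Lfun
    have e1 : (kappa2 c p * (xiPar c p - (kappa1 c p)^2) + kappa2 c p * (xiPar c p * w) * θ)
        / (xiPar c p * w + xiPar c p * ((kappa1 c p)^2 + 1 - c^2) * θ)
        = (kappa2 c p * (-(kappa1 c p) ^ 2 + xiPar c p + xiPar c p * θ * Real.sqrt (2 - c ^ 2))) /
          (xiPar c p * (θ * (kappa1 c p) ^ 2 + Real.sqrt (2 - c ^ 2) + θ * (1 - c ^ 2))) := by
      rw [← hwdef]; congr 1 <;> ring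
    have e2 : (kappa1 c p * (xiPar c p - (kappa2 c p)^2) + kappa1 c p * (xiPar c p * w) * θ)
        / (xiPar c p * w + xiPar c p * ((kappa2 c p)^2 + 1 - c^2) * θ)
        = (kappa1 c p * (-(kappa2 c p) ^ 2 + xiPar c p + xiPar c p * θ * Real.sqrt (2 - c ^ 2))) /
          (xiPar c p * (θ * (kappa2 c p) ^ 2 + Real.sqrt (2 - c ^ 2) + θ * (1 - c ^ 2))) := by
      rw [← hwdef]; congr 1 <;> ring
    rw [e1, e2]
  · intro hpgt
    have hc4 : (0:ℝ) < c^4 := by positivity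
    have h1 : 4*(c^2-1) < p * c^4 := by
      have := (div_lt_iff₀ hc4).mp (by unfold p0 at hpgt; exact hpgt)
      linarith
    have hd1pos : 0 < 2 - c^2 - c^2*q := by
      nlinarith [hqq, hd2, mul_pos hq0 hcpos2]
    have ha1 : 0 < -(theta1 c p) * kappa2 c p := by
      have e : -(theta1 c p) = 2*w/(2 - c^2 - c^2*q) := by
        unfold theta1; rw [← hwdef, ← hqdef]; ring
      rw [e]
      exact mul_pos (div_pos (by linarith) hd1pos) hk2
    have ha2 : 0 < -(theta2 c p) * kappa1 c p := by
      have e : -(theta2 c p) = 2*w/(2 - c^2 + c^2*q) := by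
        unfold theta2; rw [← hwdef, ← hqdef]; ring
      rw [e]
      exact mul_pos (div_pos (by linarith) hd2) hk1
    have hat1 : 0 < Real.arctan (-(theta1 c p) * kappa2 c p) := by
      rw [← Real.arctan_zero]; exact Real.arctan_strictMono ha1
    have hat1' : Real.arctan (-(theta1 c p) * kappa2 c p) < Real.pi/2 :=
      Real.arctan_lt_pi_div_two _
    have hat2 : 0 < Real.arctan (-(theta2 c p) * kappa1 c p) := by
      rw [← Real.arctan_zero]; exact Real.arctan_strictMono ha2
    have hat2' : Real.arctan (-(theta2 c p) * kappa1 c p) < Real.pi/2 :=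
      Real.arctan_lt_pi_div_two _
    have hpi : 0 < Real.pi := Real.pi_pos
    set R := kappa2 c p / kappa1 c p with hRdef
    have hR : 0 < R := div_pos hk2 hk1
    have eR1 : kappa2 c p / (Real.pi * kappa1 c p) = R / Real.pi := by
      rw [hRdef, div_div, mul_comm]
    have eR2 : kappa2 c p / (2 * kappa1 c p) = R / 2 := by
      rw [hRdef, div_div, mul_comm]
    rw [eR2]
    rw [hM, eR1]
    constructor
    · have k1 : R / Real.pi * Real.arctan (-(theta2 c p) * kappa1 c p) < R/2 := by
        rw [div_mul_eq_mul_div, div_lt_div_iff₀ hpi two_pos]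
        nlinarith
      have k2 : 0 < (1/Real.pi) * Real.arctan (-(theta1 c p) * kappa2 c p) := by positivity
      nlinarith
    · have k1 : (1/Real.pi) * Real.arctan (-(theta1 c p) * kappa2 c p) < 1/2 := by
        rw [div_mul_eq_mul_div, div_lt_div_iff₀ hpi two_pos]
        nlinarith
      have k2 : 0 < R / Real.pi * Real.arctan (-(theta2 c p) * kappa1 c p) := by positivity
      nlinarith
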